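/- The polynomials t, z_2, ..., z_d are algebraically independent over ℂ, where z_i = Σ_{k=0}^{i−2} (−1)^k C(i,k) x_{i−k} x_1^k t^{i−k−1} + (i−1)(−1)^{i+1} x_1^i in ℂ[t, x_1, ..., x_d]. -/

import Mathlib

open MvPolynomial

open Fin.NatCast in
/-- The semi-invariant
`z_i = Σ_{k=0}^{i-2} (-1)^k C(i,k) x_{i-k} x_1^k t^{i-k-1} + (i-1)(-1)^{i+1} x_1^i`
in `ℂ[t, x_1, …, x_d]`, where the variable of index `0` is `t`. -/
noncomputable def z (d i : ℕ) : MvPolynomial (Fin (d+1)) ℂ :=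
  (∑ k ∈ Finset.range (i-1), ((-1:ℂ)^k * (i.choose k : ℂ)) •
      (X (((i-k : ℕ)) : Fin (d+1)) * X 1 ^ k * X 0 ^ (i-k-1))) +
  (((i-1 : ℕ) : ℂ) * (-1:ℂ)^(i+1)) • (X 1 ^ i : MvPolynomial (Fin (d+1)) ℂ)

/-- The family `t, z_2, …, z_d` indexed by `Fin d`: index `0` gives `t`,
index `j ≥ 1` gives `z_{j+1}`. -/
noncomputable def tzFamily (d : ℕ) : Fin d → MvPolynomial (Fin (d+1)) ℂ :=
  fun j => if (j : ℕ) = 0 then X 0 else z d ((j : ℕ) + 1)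

open Fin.NatCast in
set_option maxHeartbeats 1000000 in
set_option synthInstance.maxHeartbeats 400000 in
theorem stmt3 (d : ℕ) (hd : 2 ≤ d) :
    AlgebraicIndependent ℂ (tzFamily d) := by
  haveI : NeZero d := ⟨by omega⟩
  set P := MvPolynomial (Fin d) ℂ with hP
  let K := FractionRing P
  let g : P →ₐ[ℂ] K := IsScalarTower.toAlgHom ℂ P K
  have hginj : Function.Injective g := IsFractionRing.injective P K
  let y : Fin d → K := fun j => g (X j)
  have hy0 : y 0 ≠ 0 := fun h =>
    MvPolynomial.X_ne_zero (0 : Fin d) (hginj (h.trans (map_zero g).symm))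
  let v : Fin (d+1) → K := fun i =>
    if (i:ℕ) = 0 then y 0
    else if (i:ℕ) = 1 then 0
    else y (((i:ℕ) - 1 : ℕ) : Fin d) * ((y 0)⁻¹)^((i:ℕ)-1)
  have hv0 : v 0 = y 0 := by simp [v]
  have h1v : ((1 : Fin (d+1)) : ℕ) = 1 := by
    rw [Fin.val_one']; exact Nat.mod_eq_of_lt (by omega)
  have hv1 : v 1 = 0 := by simp only [v, h1v]; norm_num
  have key : ∀ j : Fin d, (aeval v) (tzFamily d j) = y j := by
    intro j
    rcases Nat.eq_zero_or_pos (j:ℕ) with h0 | hpos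
    · have hj : j = 0 := Fin.ext h0
      rw [hj]
      simp [tzFamily, hv0]
    · set n := (j:ℕ) with hn
      have hnd : n < d := j.isLt
      have h1 : tzFamily d j = z d (n+1) := by
        have hj0 : j ≠ 0 := fun h => by have := congrArg Fin.val h; rw [Fin.val_zero] at this; omega
        simp [tzFamily, hj0, hn]
      rw [h1, z]
      simp only [smul_eq_C_mul, Nat.add_sub_cancel, map_add, map_sum, map_mul,
        map_pow, aeval_X, aeval_C, hv1, hv0]
      rw [Finset.sum_eq_single_of_mem 0 (Finset.mem_range.mpr (by omega))
        (fun k _ hk0 => by rw [zero_pow hk0]; ring)]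
      rw [zero_pow (by omega : n + 1 ≠ 0)]
      have hval : ((((n+1 : ℕ)) : Fin (d+1)) : ℕ) = n + 1 := by
        rw [Fin.val_natCast]; exact Nat.mod_eq_of_lt (by omega)
      have hvn : v (((n+1 : ℕ)) : Fin (d+1)) = y j * ((y 0)⁻¹)^n := by
        simp only [v, hval]
        rw [if_neg (by omega), if_neg (by omega)]
        simp only [Nat.add_sub_cancel]
        rw [hn, Fin.cast_val_eq_self]
      simp only [pow_zero, Nat.choose_zero_right, Nat.sub_zero, Nat.add_sub_cancel]
      rw [hvn]
      rw [Nat.cast_one, map_one, mul_zero, add_zero, one_mul, one_mul, mul_one,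
        mul_assoc, ← mul_pow, inv_mul_cancel₀ hy0, one_pow, mul_one]
  have hyind : AlgebraicIndependent ℂ y :=
    (MvPolynomial.algebraicIndependent_X (Fin d) ℂ).map' hginj
  have h2 : AlgebraicIndependent ℂ (fun j => (aeval v) (tzFamily d j)) := by
    rw [show (fun j => (aeval v) (tzFamily d j)) = y from funext key]
    exact hyind
  exact AlgebraicIndependent.of_comp (aeval v) h2
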